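/- Let G' be the Type C Whitney flip of a simple graph G along (H, v0, v1, v2, e). Then G' has the same vertex set as G, the same number of edges as G, and G' is connected if and only if G is connected. Consequently, when G is connected, the Betti numbers e − v + 1 of G and G' (where e is the number of edges and v the number of vertices) are equal. -/

import Mathlib

open SimpleGraph

/-- The vertex map of the Type C Whitney flip: `v0 ↦ v2`, `v1 ↦ v0`, all other vertices
fixed. -/
def rhoC {V : Type*} [DecidableEq V] (v0 v1 v2 : V) (x : V) : V :=
  if x = v0 then v2 else if x = v1 then v0 else x

lemma rhoC_injOn {V : Type*} [DecidableEq V] {v0 v1 v2 : V} {H : Set V}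
    (h02 : v0 ≠ v2) (hv2 : v2 ∉ H) : Set.InjOn (rhoC v0 v1 v2) H := by
  intro x hx y hy hxy
  unfold rhoC at hxy
  split_ifs at hxy <;> simp_all

/-- The Type C Whitney flip of `G` along `(H, v0, v1, v2, e)` where `e = s(v0, v2)`:
its edges are the edge `{v0, v1}`, the images under `rhoC v0 v1 v2` of the edges of
`G - e` with both endpoints in `H`, and the edges of `G - e` not having both endpoints
in `H`. -/
def typeCFlip {V : Type*} [DecidableEq V] (G : SimpleGraph V) (v0 v1 v2 : V) (H : Set V)
    (h01 : v0 ≠ v1) (h02 : v0 ≠ v2) (hv2 : v2 ∉ H) : SimpleGraph V where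
  Adj a b :=
    s(a, b) = s(v0, v1) ∨
    (∃ x y : V, x ∈ H ∧ y ∈ H ∧ (G.deleteEdges {s(v0, v2)}).Adj x y ∧
      a = rhoC v0 v1 v2 x ∧ b = rhoC v0 v1 v2 y) ∨
    (¬(a ∈ H ∧ b ∈ H) ∧ (G.deleteEdges {s(v0, v2)}).Adj a b)
  symm := by
    constructor
    rintro a b (he | ⟨x, y, hx, hy, h, ha, hb⟩ | ⟨hn, h⟩)
    · exact Or.inl (Sym2.eq_swap.trans he)
    · exact Or.inr (Or.inl ⟨y, x, hy, hx, h.symm, hb, ha⟩)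
    · exact Or.inr (Or.inr ⟨fun ⟨hb', ha'⟩ => hn ⟨ha', hb'⟩, h.symm⟩)
  loopless := by
    constructor
    rintro a (he | ⟨x, y, hx, hy, h, ha, hb⟩ | ⟨_, h⟩)
    · rw [Sym2.eq_iff] at he
      rcases he with ⟨h1, h2⟩ | ⟨h1, h2⟩ <;> exact h01 (h1 ▸ h2 ▸ rfl)
    · exact h.ne (rhoC_injOn h02 hv2 hx hy (ha ▸ hb))
    · exact h.ne rfl

private lemma reach_transfer {V : Type*} {G G' : SimpleGraph V} {S : Set V}
    (hS : ∀ x ∈ S, ∀ y ∈ S, G'.Reachable x y)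
    (hadj : ∀ a b : V, G.Adj a b → (a ∈ S ∧ b ∈ S) ∨ G'.Adj a b) :
    ∀ a b : V, G.Reachable a b → G'.Reachable a b := by
  intro a b hr
  obtain ⟨w⟩ := hr
  induction w with
  | nil => exact Reachable.refl _
  | cons h p ih =>
    rcases hadj _ _ h with ⟨ha, hc⟩ | h'
    · exact (hS _ ha _ hc).trans ih
    · exact h'.reachable.trans ih


/-- the Type C Whitney flip has the same vertex set (both graphs live on
`V`), the same number of edges, preserves connectedness, and hence preserves the Betti
number `e - v + 1` of a connected graph. -/
theorem typeCFlip_edgeCount_connected_betti {V : Type*} [Fintype V] [DecidableEq V]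
    (G : SimpleGraph V) (v0 v1 v2 : V) (h01 : v0 ≠ v1) (h02 : v0 ≠ v2) (h12 : v1 ≠ v2)
    (he : G.Adj v0 v2) (H : Set V) (h0 : v0 ∈ H) (h1 : v1 ∈ H) (hv2 : v2 ∉ H)
    (hHconn : ((G.deleteEdges {s(v0, v2)}).induce H).Connected)
    (hHedge : ∀ x y : V, (G.deleteEdges {s(v0, v2)}).Adj x y →
      x ∈ H \ ({v1} : Set V) → y ∈ H) :
    (typeCFlip G v0 v1 v2 H h01 h02 hv2).edgeSet.ncard = G.edgeSet.ncard ∧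
      ((typeCFlip G v0 v1 v2 H h01 h02 hv2).Connected ↔ G.Connected) ∧
      (G.Connected →
        ((typeCFlip G v0 v1 v2 H h01 h02 hv2).edgeSet.ncard : ℤ) - Fintype.card V + 1 =
          (G.edgeSet.ncard : ℤ) - Fintype.card V + 1) := by
  classical
  set G₀ := G.deleteEdges {s(v0, v2)} with hG₀def
  set G' := typeCFlip G v0 v1 v2 H h01 h02 hv2 with hG'def
  set ρ := rhoC v0 v1 v2 with hρdef
  have hρ0 : ρ v0 = v2 := by simp [hρdef, rhoC]
  have hρ1 : ρ v1 = v0 := by simp [hρdef, rhoC, h01.symm]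
  have hρx : ∀ x, x ≠ v0 → x ≠ v1 → ρ x = x := by
    intro x hx0 hx1; simp [hρdef, rhoC, hx0, hx1]
  have hρH : ∀ x ∈ H, ρ x ∈ (H \ {v1} : Set V) ∪ {v2} := by
    intro x hx
    by_cases hx0 : x = v0
    · subst hx0; rw [hρ0]; exact Or.inr rfl
    by_cases hx1 : x = v1
    · subst hx1; rw [hρ1]; exact Or.inl ⟨h0, h01⟩
    · rw [hρx x hx0 hx1]; exact Or.inl ⟨hx, hx1⟩
  have hv1ρ : ∀ x ∈ H, ρ x ≠ v1 := by
    intro x hx hc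
    rcases hρH x hx with ⟨_, hne⟩ | hmem
    · exact hne hc
    · exact h12 (hc.symm.trans hmem)
  have hG'adj : ∀ a b : V, G'.Adj a b ↔
      (s(a, b) = s(v0, v1) ∨
      (∃ x y : V, x ∈ H ∧ y ∈ H ∧ G₀.Adj x y ∧ a = ρ x ∧ b = ρ y) ∨
      (¬(a ∈ H ∧ b ∈ H) ∧ G₀.Adj a b)) := fun a b => Iff.rfl
  have hE₀ : G₀.edgeSet = G.edgeSet \ {s(v0, v2)} := edgeSet_deleteEdges _
  have hmemE : s(v0, v2) ∈ G.edgeSet := he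
  have hnotmem02 : s(v0, v2) ∉ G₀.edgeSet := by rw [hE₀]; simp
  have hEG : G.edgeSet = insert s(v0, v2) G₀.edgeSet := by
    rw [hE₀, Set.insert_diff_singleton, Set.insert_eq_self.mpr hmemE]
  -- the edge partition
  set A : Set (Sym2 V) := {e | ∃ x y : V, x ∈ H ∧ y ∈ H ∧ G₀.Adj x y ∧ e = s(x, y)} with hAdef
  set B : Set (Sym2 V) := {e | e ∈ G₀.edgeSet ∧ e ∉ A} with hBdef
  have hAiff : ∀ a b : V, s(a, b) ∈ A ↔ (G₀.Adj a b ∧ a ∈ H ∧ b ∈ H) := by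
    intro a b
    constructor
    · rintro ⟨x, y, hx, hy, hxy, heq⟩
      rw [Sym2.eq_iff] at heq
      rcases heq with ⟨rfl, rfl⟩ | ⟨rfl, rfl⟩
      · exact ⟨hxy, hx, hy⟩
      · exact ⟨hxy.symm, hy, hx⟩
    · rintro ⟨hadj, ha, hb⟩; exact ⟨a, b, ha, hb, hadj, rfl⟩
  have hAsub : A ⊆ G₀.edgeSet := by
    rintro e ⟨x, y, hx, hy, hxy, rfl⟩; exact hxy
  have hABunion : A ∪ B = G₀.edgeSet := by
    apply Set.Subset.antisymm
    · rintro e (h | h)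
      · exact hAsub h
      · exact h.1
    · intro e heE
      by_cases hA : e ∈ A
      · exact Or.inl hA
      · exact Or.inr ⟨heE, hA⟩
  have hdisjAB : Disjoint A B := by
    rw [Set.disjoint_left]; rintro e hA ⟨_, hnA⟩; exact hnA hA
  have hE' : G'.edgeSet = insert s(v0, v1) (Sym2.map ρ '' A ∪ B) := by
    ext e
    induction e using Sym2.ind with
    | _ a b =>
    rw [mem_edgeSet, hG'adj]
    constructor
    · rintro (h1' | ⟨x, y, hx, hy, hxy, rfl, rfl⟩ | ⟨hn, hadj⟩)
      · exact Or.inl h1'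
      · exact Or.inr (Or.inl ⟨s(x, y), ⟨x, y, hx, hy, hxy, rfl⟩, (Sym2.map_pair_eq _ _ _).symm ▸ rfl⟩)
      · exact Or.inr (Or.inr ⟨hadj, fun hA => hn (((hAiff a b).mp hA).2)⟩)
    · rintro (h1' | ⟨e', ⟨x, y, hx, hy, hxy, rfl⟩, hmap⟩ | ⟨hadj, hnA⟩)
      · exact Or.inl h1'
      · rw [Sym2.map_pair_eq, Sym2.eq_iff] at hmap
        rcases hmap with ⟨ha, hb⟩ | ⟨ha, hb⟩
        · exact Or.inr (Or.inl ⟨x, y, hx, hy, hxy, ha.symm, hb.symm⟩)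
        · exact Or.inr (Or.inl ⟨y, x, hy, hx, hxy.symm, hb.symm, ha.symm⟩)
      · refine Or.inr (Or.inr ⟨fun ⟨ha, hb⟩ => hnA ((hAiff a b).mpr ⟨hadj, ha, hb⟩), hadj⟩)
  -- disjointness facts for counting
  have hd1 : s(v0, v1) ∉ Sym2.map ρ '' A := by
    rintro ⟨e', ⟨x, y, hx, hy, hxy, rfl⟩, hmap⟩
    rw [Sym2.map_pair_eq, Sym2.eq_iff] at hmap
    rcases hmap with ⟨_, hb⟩ | ⟨ha, _⟩
    · exact hv1ρ y hy hb
    · exact hv1ρ x hx ha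
  have hd2 : s(v0, v1) ∉ B := by
    rintro ⟨hmem, hnA⟩
    exact hnA ((hAiff v0 v1).mpr ⟨hmem, h0, h1⟩)
  have hd3 : Disjoint (Sym2.map ρ '' A) B := by
    rw [Set.disjoint_left]
    rintro e ⟨e', ⟨x, y, hx, hy, hxy, rfl⟩, hmap⟩ ⟨hmem, hnA⟩
    rw [Sym2.map_pair_eq] at hmap
    subst hmap
    have hadj : G₀.Adj (ρ x) (ρ y) := hmem
    rcases hρH x hx with ⟨hxH, hxne⟩ | hxv2
    · rcases hρH y hy with ⟨hyH, hyne⟩ | hyv2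
      · exact hnA ((hAiff _ _).mpr ⟨hadj, hxH, hyH⟩)
      · exact hv2 (hyv2 ▸ hHedge _ _ hadj ⟨hxH, hxne⟩)
    · rcases hρH y hy with ⟨hyH, hyne⟩ | hyv2
      · exact hv2 (hxv2 ▸ hHedge _ _ hadj.symm ⟨hyH, hyne⟩)
      · exact hadj.ne (hxv2.trans hyv2.symm)
  have hinjA : Set.InjOn (Sym2.map ρ) A := by
    rintro e ⟨x, y, hx, hy, hxy, rfl⟩ e' ⟨x', y', hx', hy', hxy', rfl⟩ hmap
    rw [Sym2.map_pair_eq, Sym2.map_pair_eq, Sym2.eq_iff] at hmap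
    have hinj := rhoC_injOn (v1 := v1) (H := H) h02 hv2
    rw [Sym2.eq_iff]
    rcases hmap with ⟨ha, hb⟩ | ⟨ha, hb⟩
    · exact Or.inl ⟨hinj hx hx' ha, hinj hy hy' hb⟩
    · exact Or.inr ⟨hinj hx hy' ha, hinj hy hx' hb⟩
  have hcard : G'.edgeSet.ncard = G.edgeSet.ncard := by
    rw [hE', hEG, Set.ncard_insert_of_notMem (by
        rintro (h | h)
        exacts [hd1 h, hd2 h]) (Set.toFinite _),
      Set.ncard_insert_of_notMem hnotmem02 (Set.toFinite _),
      ← hABunion, Set.ncard_union_eq hd3 (Set.toFinite _) (Set.toFinite _),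
      Set.ncard_union_eq hdisjAB (Set.toFinite _) (Set.toFinite _),
      Set.ncard_image_of_injOn hinjA]
  -- connectivity
  set S : Set V := H ∪ {v2} with hSdef
  have hle : ∀ a b : V, G₀.Adj a b → G.Adj a b := fun a b h => (deleteEdges_adj.mp h).1
  have hreachH' : ∀ x ∈ H, ∀ y ∈ H, G'.Reachable (ρ x) (ρ y) := by
    intro x hx y hy
    exact Reachable.map
      (⟨fun a => ρ a.val, fun {a b} hab =>
        (hG'adj _ _).mpr (Or.inr (Or.inl ⟨a.1, b.1, a.2, b.2, hab, rfl, rfl⟩))⟩ :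
        (G₀.induce H) →g G')
      (hHconn.preconnected ⟨x, hx⟩ ⟨y, hy⟩)
  have hreachS' : ∀ x ∈ S, G'.Reachable x v0 := by
    rintro x (hx | hx)
    · by_cases hx1 : x = v1
      · rw [hx1]
        exact ((hG'adj v0 v1).mpr (Or.inl rfl)).reachable.symm
      by_cases hx0 : x = v0
      · subst hx0; exact Reachable.refl _
      · have := hreachH' x hx v1 h1
        rwa [hρx x hx0 hx1, hρ1] at this
    · have := hreachH' v0 h0 v1 h1
      rw [hρ0, hρ1] at this
      exact hx ▸ this
  have hreachSG : ∀ x ∈ S, G.Reachable x v0 := by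
    rintro x (hx | hx)
    · exact Reachable.map
        (⟨fun a => a.val, fun {a b} hab => hle _ _ hab⟩ : (G₀.induce H) →g G)
        (hHconn.preconnected ⟨x, hx⟩ ⟨v0, h0⟩)
    · exact hx ▸ he.symm.reachable
  have hS' : ∀ x ∈ S, ∀ y ∈ S, G'.Reachable x y :=
    fun x hx y hy => (hreachS' x hx).trans (hreachS' y hy).symm
  have hSG : ∀ x ∈ S, ∀ y ∈ S, G.Reachable x y :=
    fun x hx y hy => (hreachSG x hx).trans (hreachSG y hy).symm
  have hadjGG' : ∀ a b : V, G.Adj a b → (a ∈ S ∧ b ∈ S) ∨ G'.Adj a b := by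
    intro a b hab
    by_cases hsab : s(a, b) = s(v0, v2)
    · rw [Sym2.eq_iff] at hsab
      rcases hsab with ⟨rfl, rfl⟩ | ⟨rfl, rfl⟩
      · exact Or.inl ⟨Or.inl h0, Or.inr rfl⟩
      · exact Or.inl ⟨Or.inr rfl, Or.inl h0⟩
    have h₀ : G₀.Adj a b := deleteEdges_adj.mpr ⟨hab, by simpa using hsab⟩
    by_cases hH : a ∈ H ∧ b ∈ H
    · exact Or.inl ⟨Or.inl hH.1, Or.inl hH.2⟩
    · exact Or.inr ((hG'adj a b).mpr (Or.inr (Or.inr ⟨hH, h₀⟩)))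
  have hadjG'G : ∀ a b : V, G'.Adj a b → (a ∈ S ∧ b ∈ S) ∨ G.Adj a b := by
    intro a b hab
    rcases (hG'adj a b).mp hab with h1' | ⟨x, y, hx, hy, hxy, rfl, rfl⟩ | ⟨_, hadj⟩
    · rw [Sym2.eq_iff] at h1'
      rcases h1' with ⟨rfl, rfl⟩ | ⟨rfl, rfl⟩
      · exact Or.inl ⟨Or.inl h0, Or.inl h1⟩
      · exact Or.inl ⟨Or.inl h1, Or.inl h0⟩
    · refine Or.inl ⟨?_, ?_⟩
      · rcases hρH x hx with ⟨h', _⟩ | h'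
        exacts [Or.inl h', Or.inr h']
      · rcases hρH y hy with ⟨h', _⟩ | h'
        exacts [Or.inl h', Or.inr h']
    · exact Or.inr (hle _ _ hadj)
  have hconn : G'.Connected ↔ G.Connected := by
    rw [connected_iff, connected_iff]
    constructor
    · rintro ⟨hp, hn⟩
      exact ⟨fun a b => reach_transfer hSG hadjG'G a b (hp a b), hn⟩
    · rintro ⟨hp, hn⟩
      exact ⟨fun a b => reach_transfer hS' hadjGG' a b (hp a b), hn⟩
  exact ⟨hcard, hconn, fun _ => by rw [hcard]⟩
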